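/- Let λ and β be positive random variables on a probability space (Ω, 𝓕, ℙ), and let γ(x) = x (1/𝔼[e^{−λ x^β}] − 1) for x ∈ [0, ∞). Then γ is strictly increasing on [0, ∞) with γ(0) = 0 and γ(x) → ∞ as x → ∞; consequently the equation γ(x) = 1 has a unique root x̄ ∈ (0, ∞), and the Hausdorff saturation of the mixed Kies distribution F(t) = 𝔼[1 − exp(−λ (t/(1−t))^β)] equals d = x̄/(x̄ + 1), i.e. F(x̄/(x̄+1)) + x̄/(x̄+1) = 1. -/

import Mathlib

open MeasureTheory Filter Set

theorem mixed_kies_saturation_via_gamma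
    {Ω : Type*} [MeasurableSpace Ω] (μ : Measure Ω) [IsProbabilityMeasure μ]
    (lam beta : Ω → ℝ) (hlam_meas : Measurable lam) (hbeta_meas : Measurable beta)
    (hlam_pos : ∀ ω, 0 < lam ω) (hbeta_pos : ∀ ω, 0 < beta ω)
    (F γ : ℝ → ℝ)
    (hF : ∀ t, F t = ∫ ω, (1 - Real.exp (-(lam ω) * (t / (1 - t)) ^ (beta ω))) ∂μ)
    (hγ : ∀ x, γ x = x * (1 / (∫ ω, Real.exp (-(lam ω) * x ^ (beta ω)) ∂μ) - 1)) :
    StrictMonoOn γ (Set.Ici 0) ∧ γ 0 = 0 ∧ Tendsto γ atTop atTop ∧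
      (∃! x : ℝ, 0 < x ∧ γ x = 1) ∧
      (∀ x : ℝ, 0 < x → γ x = 1 → F (x / (x + 1)) + x / (x + 1) = 1) := by
  set G : ℝ → ℝ := fun x => ∫ ω, Real.exp (-(lam ω) * x ^ (beta ω)) ∂μ with hG
  have hγ' : ∀ x, γ x = x * (1 / G x - 1) := hγ
  -- measurability
  have hmeas : ∀ x : ℝ, Measurable fun ω => Real.exp (-(lam ω) * x ^ (beta ω)) :=
    fun x => (hlam_meas.neg.mul (hbeta_meas.const_pow x)).exp
  -- bound
  have hbound : ∀ x : ℝ, 0 ≤ x → ∀ ω, Real.exp (-(lam ω) * x ^ (beta ω)) ≤ 1 := by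
    intro x hx ω
    rw [show (1 : ℝ) = Real.exp 0 by simp]
    apply Real.exp_le_exp.mpr
    have := Real.rpow_nonneg hx (beta ω)
    nlinarith [(hlam_pos ω)]
  -- integrability
  have hint : ∀ x : ℝ, 0 ≤ x →
      Integrable (fun ω => Real.exp (-(lam ω) * x ^ (beta ω))) μ := by
    intro x hx
    refine (integrable_const (1 : ℝ)).mono' (hmeas x).aestronglyMeasurable ?_
    filter_upwards with ω
    rw [Real.norm_eq_abs, abs_of_pos (Real.exp_pos _)]
    exact hbound x hx ω
  -- positivity of G
  have hGpos : ∀ x : ℝ, 0 ≤ x → 0 < G x := by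
    intro x hx
    refine (integral_pos_iff_support_of_nonneg (fun ω => (Real.exp_pos _).le)
      (hint x hx)).mpr ?_
    have : (Function.support fun ω => Real.exp (-(lam ω) * x ^ (beta ω))) = Set.univ := by
      ext ω; simp [Function.support, Real.exp_ne_zero]
    rw [this]; simp
  -- G ≤ 1
  have hGle : ∀ x : ℝ, 0 ≤ x → G x ≤ 1 := by
    intro x hx
    calc G x ≤ ∫ _ : Ω, (1 : ℝ) ∂μ :=
          integral_mono (hint x hx) (integrable_const 1) (hbound x hx)
      _ = 1 := by simp
  -- strict antitonicity of G
  have hGanti : ∀ x y : ℝ, 0 ≤ x → x < y → G y < G x := by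
    intro x y hx hxy
    have hsub : G x - G y = ∫ ω, (Real.exp (-(lam ω) * x ^ (beta ω))
        - Real.exp (-(lam ω) * y ^ (beta ω))) ∂μ :=
      (integral_sub (hint x hx) (hint y (hx.trans hxy.le))).symm
    have hptw : ∀ ω, 0 < Real.exp (-(lam ω) * x ^ (beta ω))
        - Real.exp (-(lam ω) * y ^ (beta ω)) := by
      intro ω
      have hr : x ^ (beta ω) < y ^ (beta ω) := Real.rpow_lt_rpow hx hxy (hbeta_pos ω)
      have : -(lam ω) * y ^ (beta ω) < -(lam ω) * x ^ (beta ω) := by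
        nlinarith [hlam_pos ω]
      linarith [Real.exp_lt_exp.mpr this]
    have hipos : 0 < ∫ ω, (Real.exp (-(lam ω) * x ^ (beta ω))
        - Real.exp (-(lam ω) * y ^ (beta ω))) ∂μ := by
      refine (integral_pos_iff_support_of_nonneg (fun ω => (hptw ω).le)
        ((hint x hx).sub (hint y (hx.trans hxy.le)))).mpr ?_
      have : (Function.support fun ω => Real.exp (-(lam ω) * x ^ (beta ω))
          - Real.exp (-(lam ω) * y ^ (beta ω))) = Set.univ := by
        ext ω
        simp only [Function.mem_support, Set.mem_univ, iff_true]
        exact (hptw ω).ne'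
      rw [this]; simp
    linarith [hsub ▸ hipos]
  -- G < 1 for x > 0
  have hGlt : ∀ x : ℝ, 0 < x → G x < 1 := by
    intro x hx
    have h0 : G 0 = 1 := by
      have : ∀ ω, Real.exp (-(lam ω) * (0 : ℝ) ^ (beta ω)) = 1 := by
        intro ω
        rw [Real.zero_rpow (hbeta_pos ω).ne']
        simp
      simp only [hG, this]
      simp
    have := hGanti 0 x le_rfl hx
    linarith
  -- continuity of G on Ici 0
  have hGcont : ContinuousOn G (Set.Ici 0) := by
    intro x hx
    have : Tendsto (fun y => G y) (nhdsWithin x (Set.Ici 0)) (nhds (G x)) := by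
      apply tendsto_integral_filter_of_dominated_convergence (fun _ : Ω => (1 : ℝ))
      · exact Eventually.of_forall fun y => (hmeas y).aestronglyMeasurable
      · filter_upwards [self_mem_nhdsWithin] with y hy
        filter_upwards with ω
        rw [Real.norm_eq_abs, abs_of_pos (Real.exp_pos _)]
        exact hbound y hy ω
      · exact integrable_const 1
      · filter_upwards with ω
        have hc : ContinuousAt (fun y : ℝ => Real.exp (-(lam ω) * y ^ (beta ω))) x := by
          exact (Real.continuous_exp.continuousAt).comp
            ((continuousAt_const.mul
              (Real.continuousAt_rpow_const x (beta ω) (Or.inr (hbeta_pos ω).le))))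
        exact hc.continuousWithinAt
    exact this
  -- strict monotonicity of γ
  have hmono : StrictMonoOn γ (Set.Ici 0) := by
    intro x hx y hy hxy
    simp only [Set.mem_Ici] at hx hy
    have hGy := hGpos y hy
    have hGx := hGpos x hx
    have hlt : G y < G x := hGanti x y hx hxy
    have hAB : 1 / G x < 1 / G y := by
      apply one_div_lt_one_div_of_lt hGy hlt
    have hA : 0 ≤ 1 / G x - 1 := by
      have := hGle x hx
      have : 1 ≤ 1 / G x := by
        rw [le_div_iff₀ hGx]; linarith
      linarith
    rw [hγ' x, hγ' y]
    calc x * (1 / G x - 1) ≤ y * (1 / G x - 1) :=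
          mul_le_mul_of_nonneg_right hxy.le hA
      _ < y * (1 / G y - 1) := by
          apply mul_lt_mul_of_pos_left (by linarith) (lt_of_le_of_lt hx hxy)
  -- γ 0 = 0
  have hzero : γ 0 = 0 := by rw [hγ' 0, zero_mul]
  -- tendsto atTop
  have htend : Tendsto γ atTop atTop := by
    have hc : 0 < 1 / G 1 - 1 := by
      have h1 := hGlt 1 one_pos
      have h0 := hGpos 1 zero_le_one
      have : 1 < 1 / G 1 := by rw [lt_div_iff₀ h0]; linarith
      linarith
    have hbase : Tendsto (fun x : ℝ => x * (1 / G 1 - 1)) atTop atTop :=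
      Tendsto.atTop_mul_const hc tendsto_id
    apply tendsto_atTop_mono' _ _ hbase
    filter_upwards [eventually_ge_atTop (1 : ℝ)] with x hx1
    have hx0 : (0 : ℝ) ≤ x := le_trans zero_le_one hx1
    have hGxle : G x ≤ G 1 := by
      rcases eq_or_lt_of_le hx1 with h | h
      · rw [← h]
      · exact (hGanti 1 x zero_le_one h).le
    have h1le : 1 / G 1 ≤ 1 / G x :=
      one_div_le_one_div_of_le (hGpos x hx0) hGxle
    rw [hγ' x]
    exact mul_le_mul_of_nonneg_left (by linarith) hx0
  -- continuity of γ on Ici 0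
  have hγcont : ContinuousOn γ (Set.Ici 0) := by
    have : ContinuousOn (fun x => x * (1 / G x - 1)) (Set.Ici 0) := by
      refine (continuousOn_id.mul (ContinuousOn.sub ?_ continuousOn_const))
      exact continuousOn_const.div hGcont (fun x hx => (hGpos x hx).ne')
    exact this.congr fun x _ => hγ' x
  -- existence and uniqueness of root
  have hEU : ∃! x : ℝ, 0 < x ∧ γ x = 1 := by
    obtain ⟨b, hb2, hb0⟩ :=
      ((htend.eventually_ge_atTop 2).and (eventually_ge_atTop (0 : ℝ))).exists
    have hconIcc : ContinuousOn γ (Set.Icc 0 b) :=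
      hγcont.mono (Set.Icc_subset_Ici_self)
    have h1mem : (1 : ℝ) ∈ Set.Icc (γ 0) (γ b) := by
      rw [hzero]; exact ⟨zero_le_one, by linarith⟩
    obtain ⟨x, hxmem, hxeq⟩ := intermediate_value_Icc hb0 hconIcc h1mem
    have hxpos : 0 < x := by
      rcases eq_or_lt_of_le hxmem.1 with h | h
      · exfalso; rw [← h, hzero] at hxeq; norm_num at hxeq
      · exact h
    refine ⟨x, ⟨hxpos, hxeq⟩, ?_⟩
    rintro y ⟨hypos, hyeq⟩
    exact hmono.injOn (Set.mem_Ici.mpr hypos.le) (Set.mem_Ici.mpr hxpos.le)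
      (by rw [hyeq, hxeq])
  refine ⟨hmono, hzero, htend, hEU, ?_⟩
  -- the saturation identity
  intro x hx hγx
  have hden : x + 1 ≠ 0 := by positivity
  have hrat : x / (x + 1) / (1 - x / (x + 1)) = x := by field_simp; ring
  have hFval : F (x / (x + 1)) = 1 - G x := by
    rw [hF, hrat]
    rw [integral_sub (integrable_const 1) (hint x hx.le)]
    simp [hG]
  have hGx := hGpos x hx.le
  rw [hγ' x] at hγx
  have hkey : x - x * G x = G x := by
    field_simp at hγx
    linarith
  rw [hFval]
  have : x / (x + 1) = G x := by
    rw [div_eq_iff hden]; linarith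
  rw [this]; ring
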